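/- arXiv:1901.10727 — 4 statements merged into one kernel-verified Lean document; each statement's English description precedes it below -/
import Mathlib

section
/- Let G be a topological group that contains a subspace homeomorphic to the Sorgenfrey line ℝₗ. Then G contains a discrete subspace of cardinality continuum 𝔠 (i.e., there is a set D ⊆ G with |D| = 𝔠 whose subspace topology is discrete). -/
open Set Topology

def SorgenfreyLine : Type := ℝ

notation "ℝₗ" => SorgenfreyLine

noncomputable instance : Field ℝₗ := inferInstanceAs (Field ℝ)

noncomputable instance : LinearOrder ℝₗ := inferInstanceAs (LinearOrder ℝ)

instance : IsStrictOrderedRing ℝₗ := inferInstanceAs (IsStrictOrderedRing ℝ)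

instance : TopologicalSpace ℝₗ :=
  TopologicalSpace.generateFrom {s : Set ℝₗ | ∃ a b : ℝₗ, a < b ∧ s = Set.Ico a b}

/-- The spread of a topological space: the supremum of cardinalities of discrete subspaces. -/
noncomputable def spread (X : Type*) [TopologicalSpace X] : Cardinal :=
  sSup {c : Cardinal | ∃ D : Set X, DiscreteTopology D ∧ Cardinal.mk D = c}

def Cometrizable (Y : Type*) [t : TopologicalSpace Y] : Prop :=
  ∃ τ : TopologicalSpace Y, t ≤ τ ∧ @TopologicalSpace.MetrizableSpace Y τ ∧
    ∀ y : Y, ∀ U ∈ nhds y, ∃ V ∈ nhds y, V ⊆ U ∧ IsClosed[τ] V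

def IsKDense {X : Type*} [TopologicalSpace X] (D : Set X) : Prop :=
  ∀ K : Set X, IsCompact K → ∃ K' : Set X, IsCompact K' ∧ K ⊆ K' ∧ K' ⊆ closure (D ∩ K')

def KSeparable (X : Type*) [TopologicalSpace X] : Prop :=
  ∃ D : Set X, D.Countable ∧ IsKDense D

noncomputable instance : FloorRing ℝₗ := inferInstanceAs (FloorRing ℝ)
instance : Archimedean ℝₗ := inferInstanceAs (Archimedean ℝ)

lemma srl_isOpen_Ico (a b : ℝₗ) : IsOpen (Set.Ico a b) := by
  rcases lt_or_ge a b with hab | hab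
  · exact TopologicalSpace.isOpen_generateFrom_of_mem ⟨a, b, hab, rfl⟩
  · rw [Set.Ico_eq_empty (not_lt.mpr hab)]
    exact isOpen_empty

lemma srl_basis : TopologicalSpace.IsTopologicalBasis
    {s : Set ℝₗ | ∃ a b : ℝₗ, a < b ∧ s = Set.Ico a b} := by
  refine ⟨?_, ?_, rfl⟩
  · rintro t₁ ⟨a, b, hab, rfl⟩ t₂ ⟨c, d, hcd, rfl⟩ x hx
    refine ⟨Set.Ico (max a c) (min b d),
      ⟨max a c, min b d,
        lt_of_le_of_lt (max_le hx.1.1 hx.2.1) (lt_min hx.1.2 hx.2.2), rfl⟩,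
      ⟨max_le hx.1.1 hx.2.1, lt_min hx.1.2 hx.2.2⟩, ?_⟩
    rw [← Set.Ico_inter_Ico]
  · apply Set.eq_univ_of_forall
    intro x
    refine Set.mem_sUnion.mpr ⟨Set.Ico (x - 1) (x + 1), ⟨x - 1, x + 1, by linarith, rfl⟩,
      ⟨by linarith, by linarith⟩⟩

lemma srl_nhds {x : ℝₗ} {t : Set ℝₗ} (h : t ∈ 𝓝 x) :
    ∃ δ : ℝₗ, 0 < δ ∧ Set.Ico x (x + δ) ⊆ t := by
  rcases srl_basis.mem_nhds_iff.mp h with ⟨s, ⟨a, b, hab, rfl⟩, ⟨ha, hb⟩, hsub⟩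
  refine ⟨b - x, by linarith, fun z hz => hsub ⟨le_trans ha hz.1, ?_⟩⟩
  have := hz.2
  linarith

theorem sorgenfrey_aux {G : Type*} [Group G] [TopologicalSpace G]
    [IsTopologicalGroup G] (S : Set G) (h : Nonempty (S ≃ₜ ℝₗ)) :
    ∃ D : Set G, DiscreteTopology D ∧ Cardinal.mk D = Cardinal.continuum := by
  obtain ⟨e⟩ := h
  set F : ℝₗ → G := fun z => ((e.symm z : S) : G) with hF
  have Fcont : Continuous F := continuous_subtype_val.comp e.symm.continuous
  -- E1 : separating open sets from the Sorgenfrey jump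
  have E1 : ∀ x : ℝₗ, ∃ O : Set G, IsOpen O ∧ F x ∈ O ∧ ∀ w : ℝₗ, F w ∈ O → x ≤ w := by
    intro x
    have hU : IsOpen (e ⁻¹' (Set.Ico x (x + 1))) :=
      (srl_isOpen_Ico x (x + 1)).preimage e.continuous
    rcases isOpen_induced_iff.mp hU with ⟨O, hO, hOeq⟩
    refine ⟨O, hO, ?_, ?_⟩
    · have hx : e.symm x ∈ Subtype.val ⁻¹' O := by
        rw [hOeq]
        simp only [Set.mem_preimage, Homeomorph.apply_symm_apply]
        exact ⟨le_refl x, by linarith⟩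
      exact hx
    · intro w hw
      have hw' : e.symm w ∈ Subtype.val ⁻¹' O := hw
      rw [hOeq] at hw'
      simp only [Set.mem_preimage, Homeomorph.apply_symm_apply] at hw'
      exact hw'.1
  set d : ℝₗ → G := fun z => F z * F (-z) with hd
  -- local repulsion
  have rep : ∀ x : ℝₗ, ∃ (U : Set G) (η : ℝₗ), IsOpen U ∧ d x ∈ U ∧ 0 < η ∧
      ∀ y : ℝₗ, y ≠ x → |y - x| < η → d y ∉ U := by
    intro x
    obtain ⟨O, hO, hOx, hOle⟩ := E1 (-x)
    obtain ⟨O₁, hO₁, hO₁x, hO₁le⟩ := E1 x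
    have cΨ : Continuous fun p : ℝₗ × G => (F p.1)⁻¹ * p.2 :=
      ((Fcont.comp continuous_fst).inv).mul continuous_snd
    have hmemR : (x, d x) ∈ (fun p : ℝₗ × G => (F p.1)⁻¹ * p.2) ⁻¹' O := by
      simp only [Set.mem_preimage, hd, inv_mul_cancel_left]
      exact hOx
    obtain ⟨u, v, hu, hv, hxu, hxv, huv⟩ :=
      isOpen_prod_iff.mp (hO.preimage cΨ) x (d x) hmemR
    obtain ⟨δ, hδ, hδsub⟩ := srl_nhds (hu.mem_nhds hxu)
    have cΘ : Continuous fun p : ℝₗ × G => p.2 * (F p.1)⁻¹ :=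
      continuous_snd.mul ((Fcont.comp continuous_fst).inv)
    have hmemL : ((-x : ℝₗ), d x) ∈ (fun p : ℝₗ × G => p.2 * (F p.1)⁻¹) ⁻¹' O₁ := by
      simp only [Set.mem_preimage, hd, mul_inv_cancel_right]
      exact hO₁x
    obtain ⟨u', v', hu', hv', hxu', hxv', huv'⟩ :=
      isOpen_prod_iff.mp (hO₁.preimage cΘ) (-x) (d x) hmemL
    obtain ⟨δ', hδ', hδsub'⟩ := srl_nhds (hu'.mem_nhds hxu')
    refine ⟨v ∩ v', min δ δ', hv.inter hv', ⟨hxv, hxv'⟩, lt_min hδ hδ', ?_⟩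
    intro y hyne hyd hyU
    rw [abs_lt] at hyd
    have hyd1 : y - x < min δ δ' := hyd.2
    have hyd2 : -(min δ δ') < y - x := hyd.1
    have hmδ : min δ δ' ≤ δ := min_le_left _ _
    have hmδ' : min δ δ' ≤ δ' := min_le_right _ _
    rcases lt_or_gt_of_ne hyne with hlt | hgt
    · -- y < x : use left-side estimate
      have h1 : (-y : ℝₗ) ∈ Set.Ico (-x) (-x + δ') := ⟨by linarith, by linarith⟩
      have h3' : ((-y : ℝₗ), d y) ∈ (fun p : ℝₗ × G => p.2 * (F p.1)⁻¹) ⁻¹' O₁ :=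
        huv' ⟨hδsub' h1, hyU.2⟩
      have h3 : d y * (F (-y))⁻¹ ∈ O₁ := h3'
      have h4 : F y ∈ O₁ := by
        simpa only [hd, mul_inv_cancel_right] using h3
      exact absurd (hO₁le y h4) (not_le.mpr hlt)
    · -- y > x : use right-side estimate
      have h1 : y ∈ Set.Ico x (x + δ) := ⟨le_of_lt hgt, by linarith⟩
      have h3' : (y, d y) ∈ (fun p : ℝₗ × G => (F p.1)⁻¹ * p.2) ⁻¹' O :=
        huv ⟨hδsub h1, hyU.1⟩
      have h3 : (F y)⁻¹ * d y ∈ O := h3'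
      have h4 : F (-y) ∈ O := by
        simpa only [hd, inv_mul_cancel_left] using h3
      have h5 : (-x : ℝₗ) ≤ -y := hOle (-y) h4
      linarith
  choose U η hUopen hdU hηpos hrep using rep
  -- countable grid
  set E : ℕ × ℤ → Set ℝₗ := fun p =>
    {z : ℝₗ | 1 / ((p.1 : ℝₗ) + 1) < η z ∧ (p.2 : ℝₗ) / ((p.1 : ℝₗ) + 1) ≤ z ∧
      z < ((p.2 : ℝₗ) + 1) / ((p.1 : ℝₗ) + 1)} with hE
  have hcover : (Set.univ : Set ℝₗ) ⊆ ⋃ p, E p := by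
    intro z _
    obtain ⟨n, hn⟩ := exists_nat_one_div_lt (hηpos z)
    have h0 : (0 : ℝₗ) < (n : ℝₗ) + 1 := by positivity
    refine Set.mem_iUnion.mpr ⟨(n, ⌊z * ((n : ℝₗ) + 1)⌋), hn, ?_, ?_⟩
    · rw [div_le_iff₀ h0]
      exact Int.floor_le _
    · rw [lt_div_iff₀ h0]
      push_cast
      exact Int.lt_floor_add_one _
  have hmkR : Cardinal.mk ℝₗ = Cardinal.continuum := Cardinal.mk_real
  have hbig : ∃ p, Cardinal.mk (E p) = Cardinal.continuum := by
    by_contra hc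
    push_neg at hc
    have hlt : ∀ p, Cardinal.mk (E p) < Cardinal.continuum := by
      intro p
      refine lt_of_le_of_ne ?_ (hc p)
      calc Cardinal.mk (E p) ≤ Cardinal.mk ℝₗ := Cardinal.mk_set_le _
        _ = Cardinal.continuum := hmkR
    have h1 : Cardinal.mk ℝₗ ≤ Cardinal.sum (fun p => Cardinal.mk (E p)) := by
      have huniv : (⋃ p, E p) = (Set.univ : Set ℝₗ) :=
        Set.eq_univ_of_univ_subset hcover
      calc Cardinal.mk ℝₗ = Cardinal.mk (⋃ p, E p) := by rw [huniv, Cardinal.mk_univ]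
        _ ≤ Cardinal.sum (fun p => Cardinal.mk (E p)) := Cardinal.mk_iUnion_le_sum_mk
    have h2 : Cardinal.sum (fun p => Cardinal.mk (E p)) <
        Cardinal.prod (fun _ : ℕ × ℤ => Cardinal.continuum) :=
      Cardinal.sum_lt_prod _ _ hlt
    have h3 : Cardinal.prod (fun _ : ℕ × ℤ => Cardinal.continuum) = Cardinal.continuum := by
      rw [Cardinal.prod_const', Cardinal.mk_denumerable, Cardinal.continuum_power_aleph0]
    rw [h3] at h2
    rw [hmkR] at h1
    exact absurd (lt_of_le_of_lt h1 h2) (lt_irrefl _)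
  obtain ⟨⟨n, k⟩, hcard⟩ := hbig
  set A : Set ℝₗ := E (n, k) with hA
  -- points of A repel each other
  have hkey : ∀ x ∈ A, ∀ y ∈ A, d y ∈ U x → y = x := by
    intro x hx y hy hyU
    by_contra hne
    refine hrep x y hne ?_ hyU
    obtain ⟨hx1, hx2, hx3⟩ := hx
    obtain ⟨hy1, hy2, hy3⟩ := hy
    have hsum : ((k : ℝₗ) + 1) / ((n : ℝₗ) + 1) =
        (k : ℝₗ) / ((n : ℝₗ) + 1) + 1 / ((n : ℝₗ) + 1) := by
      rw [add_div]
    have habs : |y - x| < 1 / ((n : ℝₗ) + 1) := by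
      rw [abs_lt]
      constructor <;> [skip; skip] <;> linarith
    exact lt_trans habs hx1
  have hinj : Set.InjOn d A := by
    intro a ha b hb hab
    exact (hkey a ha b hb (hab ▸ hdU a)).symm
  refine ⟨d '' A, ?_, ?_⟩
  · -- discreteness
    rw [discreteTopology_iff_isOpen_singleton]
    rintro ⟨g, hg⟩
    obtain ⟨x, hxA, rfl⟩ := hg
    have heq : ({⟨d x, ⟨x, hxA, rfl⟩⟩} : Set (d '' A)) = Subtype.val ⁻¹' (U x) := by
      ext b
      obtain ⟨g', hg'⟩ := b
      simp only [Set.mem_singleton_iff, Set.mem_preimage, Subtype.mk.injEq, Subtype.ext_iff]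
      constructor
      · rintro rfl
        exact hdU x
      · intro hbU
        obtain ⟨y, hyA, rfl⟩ := hg'
        rw [hkey x hxA y hyA hbU]
    rw [heq]
    exact (hUopen x).preimage continuous_subtype_val
  · -- cardinality
    have hequiv : Nonempty (A ≃ (d '' A : Set G)) := ⟨Equiv.Set.imageOfInjOn _ _ hinj⟩
    have hl := Cardinal.lift_mk_eq'.mpr hequiv
    rw [hcard, Cardinal.lift_continuum] at hl
    rw [← Cardinal.lift_uzero (Cardinal.mk (d '' A : Set G)), ← hl]

/-- Each topological group containing a topological copy of the Sorgenfrey line contains a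
discrete subspace of cardinality continuum. -/
theorem sorgenfrey_in_group_discrete_continuum {G : Type*} [Group G] [TopologicalSpace G]
    [IsTopologicalGroup G] (S : Set G) (h : Nonempty (S ≃ₜ ℝₗ)) :
    ∃ D : Set G, DiscreteTopology D ∧ Cardinal.mk D = Cardinal.continuum :=
  sorgenfrey_aux S h
end

section
/- Let G be a topological group containing a subspace X homeomorphic to an uncountable subspace of the Sorgenfrey line ℝₗ. Then the spread of G is at least the spread of X × X, i.e., s(G) ≥ s(X × X). -/
open Set Topology

lemma sorg_isOpen_iff {s : Set ℝₗ} :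
    IsOpen s ↔ TopologicalSpace.GenerateOpen
      {t : Set ℝₗ | ∃ a b : ℝₗ, a < b ∧ t = Set.Ico a b} s := Iff.rfl

lemma isOpen_Ico_sorg (a b : ℝₗ) : IsOpen (Ico a b) := by
  rcases lt_or_ge a b with hab | hab
  · exact sorg_isOpen_iff.mpr (TopologicalSpace.GenerateOpen.basic _ ⟨a, b, hab, rfl⟩)
  · rw [Ico_eq_empty (not_lt.mpr hab)]; exact isOpen_empty

lemma sorg_exists_Ico {s : Set ℝₗ} (hs : IsOpen s) :
    ∀ x ∈ s, ∃ δ : ℝₗ, 0 < δ ∧ Ico x (x + δ) ⊆ s := by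
  rw [sorg_isOpen_iff] at hs
  induction hs with
  | basic t ht =>
      obtain ⟨a, b, hab, rfl⟩ := ht
      intro x hx
      refine ⟨b - x, sub_pos.2 hx.2, fun y hy => ⟨hx.1.trans hy.1, ?_⟩⟩
      have := hy.2; linarith [this]
  | univ => exact fun x _ => ⟨1, one_pos, fun y _ => trivial⟩
  | inter s t _ _ ihs iht =>
      intro x hx
      obtain ⟨δ₁, h1, hs1⟩ := ihs x hx.1
      obtain ⟨δ₂, h2, hs2⟩ := iht x hx.2
      refine ⟨min δ₁ δ₂, lt_min h1 h2, fun y hy => ⟨hs1 ⟨hy.1, ?_⟩, hs2 ⟨hy.1, ?_⟩⟩⟩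
      · exact hy.2.trans_le (add_le_add_right (min_le_left _ _) x)
      · exact hy.2.trans_le (add_le_add_right (min_le_right _ _) x)
  | sUnion S _ ih =>
      intro x hx
      obtain ⟨t, htS, hxt⟩ := hx
      obtain ⟨δ, hδ, hsub⟩ := ih t htS x hxt
      exact ⟨δ, hδ, hsub.trans (subset_sUnion_of_mem htS)⟩

lemma discrete_of_sep {α : Type*} [TopologicalSpace α] {E : Set α}
    (h : ∀ p ∈ E, ∃ U : Set α, IsOpen U ∧ p ∈ U ∧ ∀ q ∈ E, q ∈ U → q = p) :
    DiscreteTopology E := by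
  rw [discreteTopology_iff_isOpen_singleton]
  rintro ⟨p, hp⟩
  obtain ⟨U, hU, hpU, hsep⟩ := h p hp
  have heq : ({⟨p, hp⟩} : Set E) = Subtype.val ⁻¹' U := by
    ext ⟨q, hq⟩
    simp only [mem_singleton_iff, mem_preimage, Subtype.mk.injEq]
    exact ⟨fun he => he ▸ hpU, fun hqU => hsep q hq hqU⟩
  rw [heq]
  exact hU.preimage continuous_subtype_val

/-- If a topological group $G$ contains a subspace homeomorphic to an uncountable subspace $X$
of the Sorgenfrey line, then $s(G) \ge s(X \times X)$. -/
theorem spread_ge_spread_square {G : Type u} [Group G] [TopologicalSpace G]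
    [IsTopologicalGroup G] (X : Set ℝₗ) (hX : ¬ X.Countable)
    (S : Set G) (h : Nonempty (S ≃ₜ X)) :
    Cardinal.lift.{u} (spread (X × X)) ≤ Cardinal.lift.{0} (spread G) := by
  classical
  obtain ⟨ψ⟩ := h
  set φ : X → G := fun x => ((ψ.symm x : S) : G) with hφdef
  have hφc : Continuous φ := continuous_subtype_val.comp ψ.symm.continuous
  have hφi : Function.Injective φ :=
    Subtype.val_injective.comp (Equiv.injective ψ.symm.toEquiv)
  -- trace of neighborhoods of φ x on S is controlled by Sorgenfrey right-intervals
  have trace : ∀ (x : X) (δ : ℝₗ), 0 < δ → ∃ U : Set G, IsOpen U ∧ φ x ∈ U ∧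
      ∀ y : X, φ y ∈ U → (y : ℝₗ) ∈ Ico (x : ℝₗ) ((x : ℝₗ) + δ) := by
    intro x δ hδ
    have hIopen : IsOpen ((fun s : S => ((ψ s : X) : ℝₗ)) ⁻¹' (Ico (x : ℝₗ) ((x : ℝₗ) + δ))) :=
      (isOpen_Ico_sorg _ _).preimage (continuous_subtype_val.comp ψ.continuous)
    obtain ⟨U, hU, hUeq⟩ := isOpen_induced_iff.mp hIopen
    refine ⟨U, hU, ?_, ?_⟩
    · have hmem : ψ.symm x ∈ (fun s : S => ((ψ s : X) : ℝₗ)) ⁻¹' (Ico (x : ℝₗ) ((x : ℝₗ) + δ)) := by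
        simp only [mem_preimage, Homeomorph.apply_symm_apply]
        exact ⟨le_refl _, by linarith⟩
      rw [← hUeq] at hmem
      exact hmem
    · intro y hy
      have hmem : ψ.symm y ∈ Subtype.val ⁻¹' U := hy
      rw [hUeq] at hmem
      simpa only [mem_preimage, Homeomorph.apply_symm_apply] using hmem
  -- continuity of z ↦ (φ z)⁻¹ * φ y at y = z
  have trace1 : ∀ (z : X) (W : Set G), IsOpen W → (1 : G) ∈ W →
      ∃ δ : ℝₗ, 0 < δ ∧ ∀ y : X, (y : ℝₗ) ∈ Ico (z : ℝₗ) ((z : ℝₗ) + δ) → (φ z)⁻¹ * φ y ∈ W := by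
    intro z W hW h1
    have hopen : IsOpen ((fun y : X => (φ z)⁻¹ * φ y) ⁻¹' W) :=
      hW.preimage (continuous_const.mul hφc)
    obtain ⟨P, hP, hPeq⟩ := isOpen_induced_iff.mp hopen
    have hzP : (z : ℝₗ) ∈ P := by
      have hz : z ∈ Subtype.val ⁻¹' P := by
        rw [hPeq]; simp only [mem_preimage]; simpa using h1
      exact hz
    obtain ⟨δ, hδ, hsub⟩ := sorg_exists_Ico hP _ hzP
    refine ⟨δ, hδ, fun y hy => ?_⟩
    have hyP : y ∈ Subtype.val ⁻¹' P := hsub hy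
    rw [hPeq] at hyP
    exact hyP
  -- the collection of cardinalities of discrete subspaces of G
  set R : Set Cardinal.{u} :=
    {c : Cardinal | ∃ E : Set G, DiscreteTopology E ∧ Cardinal.mk E = c} with hRdef
  have hRbdd : BddAbove R := by
    refine ⟨Cardinal.mk G, ?_⟩
    rintro c ⟨E, _, rfl⟩
    exact Cardinal.mk_set_le E
  have hspreadG : spread G = sSup R := rfl
  -- ℵ₀ ≤ sSup R : construct an infinite discrete subspace of G
  have haleph : Cardinal.aleph0 ≤ sSup R := by
    -- points of X that are right-isolated in X form a countable set
    have hBcnt : Set.Countable {x : ℝₗ | x ∈ X ∧ ∃ q : ℚ, x < (q : ℝₗ) ∧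
        ∀ y ∈ X, ¬(x < y ∧ y < (q : ℝₗ))} := by
      set B := {x : ℝₗ | x ∈ X ∧ ∃ q : ℚ, x < (q : ℝₗ) ∧
        ∀ y ∈ X, ¬(x < y ∧ y < (q : ℝₗ))} with hBdef
      have hch : ∀ x : B, ∃ q : ℚ, (x : ℝₗ) < (q : ℝₗ) ∧
          ∀ y ∈ X, ¬((x : ℝₗ) < y ∧ y < (q : ℝₗ)) := fun x => x.2.2
      choose f hf1 hf2 using hch
      have hfinj : Function.Injective f := by
        intro x x' heq
        by_contra hne
        have hxne : (x : ℝₗ) ≠ (x' : ℝₗ) := by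
          intro hc; exact hne (Subtype.ext hc)
        rcases hxne.lt_or_gt with hlt | hlt
        · exact hf2 x (x' : ℝₗ) x'.2.1 ⟨hlt, by rw [heq]; exact hf1 x'⟩
        · exact hf2 x' (x : ℝₗ) x.2.1 ⟨hlt, by rw [← heq]; exact hf1 x⟩
      have : Countable B := hfinj.countable
      exact Set.countable_coe_iff.mp this
    have hx0 : ∃ x₀, x₀ ∈ X ∧ ∀ z : ℝₗ, x₀ < z → ∃ y, y ∈ X ∧ x₀ < y ∧ y < z := by
      by_contra hcon
      push_neg at hcon
      apply hX
      refine Set.Countable.mono ?_ hBcnt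
      intro x hx
      obtain ⟨z, hz, hno⟩ := hcon x hx
      obtain ⟨q, hq1, hq2⟩ := exists_rat_btwn hz
      refine ⟨hx, q, hq1, fun y hy hc => ?_⟩
      exact absurd (hc.2.trans hq2) (not_lt.mpr (hno y hy hc.1))
    obtain ⟨x₀, hx₀X, hstep⟩ := hx0
    have hne : ∀ z : {t : ℝₗ // t ∈ X ∧ x₀ < t},
        ∃ y : {t : ℝₗ // t ∈ X ∧ x₀ < t}, (y : ℝₗ) < z := by
      intro z
      obtain ⟨y, hy1, hy2, hy3⟩ := hstep z z.2.2
      exact ⟨⟨y, hy1, hy2⟩, hy3⟩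
    have hfirst : ∃ y : {t : ℝₗ // t ∈ X ∧ x₀ < t}, True := by
      obtain ⟨y, hy1, hy2, _⟩ := hstep (x₀ + 1) (by linarith)
      exact ⟨⟨y, hy1, hy2⟩, trivial⟩
    let F : ℕ → {t : ℝₗ // t ∈ X ∧ x₀ < t} := fun n =>
      Nat.rec hfirst.choose (fun _ p => (hne p).choose) n
    have hsucc : ∀ n, F (n + 1) = (hne (F n)).choose := fun _ => rfl
    have hFdec : ∀ n, (F (n + 1)).1 < (F n).1 := fun n => by
      rw [hsucc]; exact (hne (F n)).choose_spec
    have hanti : StrictAnti fun n => (F n).1 := strictAnti_nat_of_succ_lt hFdec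
    let v : ℕ → X := fun n => ⟨(F n).1, (F n).2.1⟩
    have hvAnti : StrictAnti fun n => ((v n : ℝₗ)) := hanti
    have hvinj : Function.Injective fun n => φ (v n) := by
      intro m n hmn
      have h1 : v m = v n := hφi hmn
      have h2 : ((v m : ℝₗ)) = ((v n : ℝₗ)) := congrArg Subtype.val h1
      exact hvAnti.injective h2
    have hE0disc : DiscreteTopology (Set.range fun n => φ (v n)) := by
      apply discrete_of_sep
      rintro p ⟨n, rfl⟩
      rcases n with _ | n
      · obtain ⟨U, hUo, hUm, hUt⟩ := trace (v 0) 1 one_pos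
        refine ⟨U, hUo, hUm, ?_⟩
        rintro q ⟨m, rfl⟩ hqU
        have hm := hUt (v m) hqU
        have hm0 : m = 0 := by
          by_contra hne
          have : ((v m : ℝₗ)) < ((v 0 : ℝₗ)) := hvAnti (Nat.pos_of_ne_zero hne)
          exact absurd hm.1 (not_le.mpr this)
        rw [hm0]
      · have hδ : (0 : ℝₗ) < ((v n : ℝₗ)) - ((v (n + 1) : ℝₗ)) :=
          sub_pos.2 (hvAnti (Nat.lt_succ_self n))
        obtain ⟨U, hUo, hUm, hUt⟩ := trace (v (n + 1)) _ hδ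
        refine ⟨U, hUo, hUm, ?_⟩
        rintro q ⟨m, rfl⟩ hqU
        have hm := hUt (v m) hqU
        have hmn : m = n + 1 := by
          by_contra hne
          rcases Nat.lt_or_ge m (n + 1) with hlt | hge
          · have hle : ((v n : ℝₗ)) ≤ ((v m : ℝₗ)) :=
              hvAnti.antitone (Nat.le_of_lt_succ hlt)
            have := hm.2
            linarith
          · have hgt : n + 1 < m := lt_of_le_of_ne hge (Ne.symm hne)
            have : ((v m : ℝₗ)) < ((v (n + 1) : ℝₗ)) := hvAnti hgt
            exact absurd hm.1 (not_le.mpr this)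
        rw [hmn]
    have hE0c : Cardinal.mk (Set.range fun n => φ (v n)) = Cardinal.aleph0 := by
      haveI : Countable (Set.range fun n => φ (v n)) := (Set.countable_range _).to_subtype
      haveI : Infinite (Set.range fun n => φ (v n)) :=
        (Set.infinite_range_of_injective hvinj).to_subtype
      exact Cardinal.mk_eq_aleph0 _
    exact le_csSup hRbdd ⟨_, hE0disc, hE0c⟩
  -- Key step: any discrete subspace of X × X has cardinality at most sSup R
  have key : ∀ D : Set (X × X), DiscreteTopology D →
      Cardinal.lift.{u} (Cardinal.mk D) ≤ sSup R := by
    intro D hD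
    have hdata : ∀ d : X × X, ∃ (r : ℝₗ) (ρ p q : ℚ) (N : Set G),
        0 < r ∧ 0 < (ρ : ℝₗ) ∧ (ρ : ℝₗ) ≤ r ∧
        (d ∈ D →
          ((p : ℝₗ) ≤ (d.1 : ℝₗ) ∧ (d.1 : ℝₗ) < (p : ℝₗ) + (ρ : ℝₗ)) ∧
           ((q : ℝₗ) ≤ (d.2 : ℝₗ) ∧ (d.2 : ℝₗ) < (q : ℝₗ) + (ρ : ℝₗ)) ∧
           IsOpen N ∧ (φ d.1 * (φ d.2)⁻¹ ∈ N) ∧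
           (∀ e ∈ D, (e.1 : ℝₗ) ∈ Ico (d.1 : ℝₗ) ((d.1 : ℝₗ) + r) →
              (e.2 : ℝₗ) ∈ Ico (d.2 : ℝₗ) ((d.2 : ℝₗ) + r) → e = d) ∧
           (∀ e : X × X, φ e.1 * (φ e.2)⁻¹ ∈ N →
              (e.2 : ℝₗ) ∈ Ico (d.2 : ℝₗ) ((d.2 : ℝₗ) + (ρ : ℝₗ)) →
              (e.1 : ℝₗ) ∈ Ico (d.1 : ℝₗ) ((d.1 : ℝₗ) + r)) ∧
           (∀ e : X × X, φ e.1 * (φ e.2)⁻¹ ∈ N →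
              (e.1 : ℝₗ) ∈ Ico (d.1 : ℝₗ) ((d.1 : ℝₗ) + (ρ : ℝₗ)) →
              (e.2 : ℝₗ) ∈ Ico (d.2 : ℝₗ) ((d.2 : ℝₗ) + r))) := by
      intro d
      by_cases hd : d ∈ D
      · -- isolation radius from discreteness
        obtain ⟨r, hr, hiso⟩ : ∃ r : ℝₗ, 0 < r ∧ ∀ e ∈ D,
            (e.1 : ℝₗ) ∈ Ico (d.1 : ℝₗ) ((d.1 : ℝₗ) + r) →
            (e.2 : ℝₗ) ∈ Ico (d.2 : ℝₗ) ((d.2 : ℝₗ) + r) → e = d := by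
          have hsing : IsOpen ({⟨d, hd⟩} : Set D) := isOpen_discrete _
          obtain ⟨O, hOo, hOeq⟩ := isOpen_induced_iff.mp hsing
          have hdO : d ∈ O := by
            have hmem : (⟨d, hd⟩ : D) ∈ Subtype.val ⁻¹' O := by rw [hOeq]; rfl
            exact hmem
          obtain ⟨u', v', hu'o, hv'o, hdu, hdv, huv⟩ := isOpen_prod_iff.mp hOo d.1 d.2 hdO
          obtain ⟨Pa, hPao, hPaeq⟩ := isOpen_induced_iff.mp hu'o
          obtain ⟨Pb, hPbo, hPbeq⟩ := isOpen_induced_iff.mp hv'o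
          have hdPa : (d.1 : ℝₗ) ∈ Pa := by rw [← hPaeq] at hdu; exact hdu
          have hdPb : (d.2 : ℝₗ) ∈ Pb := by rw [← hPbeq] at hdv; exact hdv
          obtain ⟨δa, hδa, hsa⟩ := sorg_exists_Ico hPao _ hdPa
          obtain ⟨δb, hδb, hsb⟩ := sorg_exists_Ico hPbo _ hdPb
          refine ⟨min δa δb, lt_min hδa hδb, ?_⟩
          intro e heD h1 h2
          have he1 : e.1 ∈ u' := by
            rw [← hPaeq]
            exact hsa ⟨h1.1, h1.2.trans_le (add_le_add_right (min_le_left _ _) _)⟩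
          have he2 : e.2 ∈ v' := by
            rw [← hPbeq]
            exact hsb ⟨h2.1, h2.2.trans_le (add_le_add_right (min_le_right _ _) _)⟩
          have heO : e ∈ O := huv ⟨he1, he2⟩
          have hmem : (⟨e, heD⟩ : D) ∈ Subtype.val ⁻¹' O := heO
          rw [hOeq] at hmem
          exact congrArg Subtype.val hmem
        obtain ⟨U₀, hU₀o, hU₀m, hU₀t⟩ := trace d.1 r hr
        obtain ⟨V₀, hV₀o, hV₀m, hV₀t⟩ := trace d.2 r hr
        have hmo1 : IsOpen ((fun pq : G × G => pq.1 * pq.2) ⁻¹' U₀) :=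
          hU₀o.preimage continuous_mul
        obtain ⟨U₁, W1, hU₁o, hW1o, hAU₁, h1W1, hmul1⟩ :=
          isOpen_prod_iff.mp hmo1 (φ d.1) 1 (by simpa using hU₀m)
        have hmo2 : IsOpen ((fun pq : G × G => pq.1 * pq.2) ⁻¹' V₀) :=
          hV₀o.preimage continuous_mul
        obtain ⟨V₂, W2, hV₂o, hW2o, hBV₂, h1W2, hmul2⟩ :=
          isOpen_prod_iff.mp hmo2 (φ d.2) 1 (by simpa using hV₀m)
        obtain ⟨δ₁, hδ₁, hδ₁t⟩ := trace1 d.2 W1 hW1o h1W1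
        obtain ⟨δ₂, hδ₂, hδ₂t⟩ := trace1 d.1 W2 hW2o h1W2
        obtain ⟨ρ, hρ0, hρm⟩ : ∃ ρ : ℚ, 0 < (ρ : ℝₗ) ∧ (ρ : ℝₗ) < min r (min δ₁ δ₂) := by
          obtain ⟨ρ, h1, h2⟩ := exists_rat_btwn
            (show (0 : ℝₗ) < min r (min δ₁ δ₂) from lt_min hr (lt_min hδ₁ hδ₂))
          exact ⟨ρ, h1, h2⟩
        have hρr : (ρ : ℝₗ) ≤ r := le_of_lt (hρm.trans_le (min_le_left _ _))
        have hρδ₁ : (ρ : ℝₗ) ≤ δ₁ :=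
          le_of_lt (hρm.trans_le ((min_le_right _ _).trans (min_le_left _ _)))
        have hρδ₂ : (ρ : ℝₗ) ≤ δ₂ :=
          le_of_lt (hρm.trans_le ((min_le_right _ _).trans (min_le_right _ _)))
        obtain ⟨p, hp1, hp2⟩ := exists_rat_btwn
          (show (d.1 : ℝₗ) - (ρ : ℝₗ) < (d.1 : ℝₗ) by linarith)
        obtain ⟨q, hq1, hq2⟩ := exists_rat_btwn
          (show (d.2 : ℝₗ) - (ρ : ℝₗ) < (d.2 : ℝₗ) by linarith)
        refine ⟨r, ρ, p, q,
          {g : G | g * φ d.2 ∈ U₁} ∩ {g : G | g⁻¹ * φ d.1 ∈ V₂},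
          hr, hρ0, hρr, fun _ => ?_⟩
        refine ⟨⟨le_of_lt hp2, by linarith⟩, ⟨le_of_lt hq2, by linarith⟩, ?_, ?_, hiso, ?_, ?_⟩
        · apply IsOpen.inter
          · exact hU₁o.preimage (continuous_id.mul continuous_const)
          · exact hV₂o.preimage ((continuous_inv).mul continuous_const)
        · constructor
          · show φ d.1 * (φ d.2)⁻¹ * φ d.2 ∈ U₁
            have : φ d.1 * (φ d.2)⁻¹ * φ d.2 = φ d.1 := by group
            rw [this]; exact hAU₁
          · show (φ d.1 * (φ d.2)⁻¹)⁻¹ * φ d.1 ∈ V₂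
            have : (φ d.1 * (φ d.2)⁻¹)⁻¹ * φ d.1 = φ d.2 := by group
            rw [this]; exact hBV₂
        · -- P1
          rintro e ⟨hN1, _⟩ he2
          have h2 : (φ d.2)⁻¹ * φ e.2 ∈ W1 :=
            hδ₁t e.2 ⟨he2.1, he2.2.trans_le (by linarith)⟩
          have hmm : ((φ e.1 * (φ e.2)⁻¹ * φ d.2), ((φ d.2)⁻¹ * φ e.2)) ∈ U₁ ×ˢ W1 :=
            ⟨hN1, h2⟩
          have := hmul1 hmm
          simp only [mem_preimage] at this
          have heq : φ e.1 * (φ e.2)⁻¹ * φ d.2 * ((φ d.2)⁻¹ * φ e.2) = φ e.1 := by group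
          rw [heq] at this
          exact hU₀t e.1 this
        · -- P2
          rintro e ⟨_, hN2⟩ he1
          have h2 : (φ d.1)⁻¹ * φ e.1 ∈ W2 :=
            hδ₂t e.1 ⟨he1.1, he1.2.trans_le (by linarith)⟩
          have hmm : (((φ e.1 * (φ e.2)⁻¹)⁻¹ * φ d.1), ((φ d.1)⁻¹ * φ e.1)) ∈ V₂ ×ˢ W2 :=
            ⟨hN2, h2⟩
          have := hmul2 hmm
          simp only [mem_preimage] at this
          have heq : (φ e.1 * (φ e.2)⁻¹)⁻¹ * φ d.1 * ((φ d.1)⁻¹ * φ e.1) = φ e.2 := by group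
          rw [heq] at this
          exact hV₀t e.2 this
      · exact ⟨1, 1, 0, 0, univ, one_pos, by norm_num, by norm_num, fun hdd => absurd hdd hd⟩
    choose rr ρρ pp qq NN hr0 hρ0 hρr hprops using hdata
    set Dc : ℚ × ℚ × ℚ → Set (X × X) :=
      fun c => {d | d ∈ D ∧ (ρρ d, pp d, qq d) = c} with hDcdef
    have hcover : D = ⋃ c, Dc c := by
      ext d
      simp only [mem_iUnion, hDcdef, mem_setOf_eq]
      exact ⟨fun hd => ⟨(ρρ d, pp d, qq d), hd, rfl⟩, fun ⟨c, hd, _⟩ => hd⟩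
    -- within one class, membership in N d forces equality
    have hC1 : ∀ c : ℚ × ℚ × ℚ, ∀ d ∈ Dc c, ∀ d' ∈ Dc c,
        φ d'.1 * (φ d'.2)⁻¹ ∈ NN d → d' = d := by
      rintro c d ⟨hdD, hdc⟩ d' ⟨hd'D, hd'c⟩ hmem
      obtain ⟨⟨hp1, hp2⟩, ⟨hq1, hq2⟩, hNo, hNm, hiso, hP1, hP2⟩ := hprops d hdD
      obtain ⟨⟨hp1', hp2'⟩, ⟨hq1', hq2'⟩, _, _, hiso', _, _⟩ := hprops d' hd'D
      have hcc : (ρρ d', pp d', qq d') = (ρρ d, pp d, qq d) := by rw [hd'c, hdc]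
      have hρe : ρρ d' = ρρ d := congrArg Prod.fst hcc
      have hpe : pp d' = pp d := congrArg (fun z => z.2.1) hcc
      have hqe : qq d' = qq d := congrArg (fun z => z.2.2) hcc
      have hρe' : ((ρρ d' : ℚ) : ℝₗ) = ((ρρ d : ℚ) : ℝₗ) := by rw [hρe]
      have hpe' : ((pp d' : ℚ) : ℝₗ) = ((pp d : ℚ) : ℝₗ) := by rw [hpe]
      have hqe' : ((qq d' : ℚ) : ℝₗ) = ((qq d : ℚ) : ℝₗ) := by rw [hqe]
      rcases le_or_gt (d.2 : ℝₗ) (d'.2 : ℝₗ) with hb | hb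
      · have he2 : (d'.2 : ℝₗ) ∈ Ico (d.2 : ℝₗ) ((d.2 : ℝₗ) + (ρρ d : ℝₗ)) := by
          constructor
          · exact hb
          · have := hq2'; rw [hqe', hρe'] at this; linarith
        have he1 := hP1 d' hmem he2
        have ha2 : (d'.1 : ℝₗ) ∈ Ico (d.1 : ℝₗ) ((d.1 : ℝₗ) + (ρρ d : ℝₗ)) := by
          constructor
          · exact he1.1
          · have := hp2'; rw [hpe', hρe'] at this; linarith
        have he2' := hP2 d' hmem ha2
        exact hiso d' hd'D he1 he2'
      · rcases le_or_gt (d.1 : ℝₗ) (d'.1 : ℝₗ) with ha | ha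
        · have ha' : (d'.1 : ℝₗ) ∈ Ico (d.1 : ℝₗ) ((d.1 : ℝₗ) + (ρρ d : ℝₗ)) := by
            constructor
            · exact ha
            · have := hp2'; rw [hpe', hρe'] at this; linarith
          have h2' := hP2 d' hmem ha'
          exact absurd h2'.1 (not_le.mpr hb)
        · have h1 : (d.1 : ℝₗ) ∈ Ico (d'.1 : ℝₗ) ((d'.1 : ℝₗ) + rr d') := by
            constructor
            · exact le_of_lt ha
            · have h' := hρr d'
              have : (d.1 : ℝₗ) < (d'.1 : ℝₗ) + (ρρ d' : ℝₗ) := by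
                rw [hρe']
                have hx := hp1'; rw [hpe'] at hx
                linarith
              linarith
          have h2 : (d.2 : ℝₗ) ∈ Ico (d'.2 : ℝₗ) ((d'.2 : ℝₗ) + rr d') := by
            constructor
            · exact le_of_lt hb
            · have h' := hρr d'
              have : (d.2 : ℝₗ) < (d'.2 : ℝₗ) + (ρρ d' : ℝₗ) := by
                rw [hρe']
                have hx := hq1'; rw [hqe'] at hx
                linarith
              linarith
          exact (hiso' d hdD h1 h2).symm
    -- each class maps injectively onto a discrete subspace of G
    have hdisc : ∀ c : ℚ × ℚ × ℚ,
        DiscreteTopology ((fun d : X × X => φ d.1 * (φ d.2)⁻¹) '' Dc c) := by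
      intro c
      apply discrete_of_sep
      rintro pv ⟨d, hd, rfl⟩
      obtain ⟨_, _, hNo, hNm, _, _, _⟩ := hprops d hd.1
      refine ⟨NN d, hNo, hNm, ?_⟩
      rintro qv ⟨d', hd', rfl⟩ hq
      rw [hC1 c d hd d' hd' hq]
    have hinj : ∀ c : ℚ × ℚ × ℚ, Set.InjOn (fun d : X × X => φ d.1 * (φ d.2)⁻¹) (Dc c) := by
      intro c d hd d' hd' heq
      obtain ⟨_, _, _, hNm, _, _, _⟩ := hprops d hd.1
      have hmm : φ d'.1 * (φ d'.2)⁻¹ ∈ NN d := by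
        have h2 : φ d.1 * (φ d.2)⁻¹ = φ d'.1 * (φ d'.2)⁻¹ := heq
        rw [← h2]; exact hNm
      exact (hC1 c d hd d' hd' hmm).symm
    have hcard : ∀ c : ℚ × ℚ × ℚ, Cardinal.lift.{u} (Cardinal.mk (Dc c)) ≤ sSup R := by
      intro c
      have hmemR : Cardinal.mk ((fun d : X × X => φ d.1 * (φ d.2)⁻¹) '' Dc c) ∈ R :=
        ⟨_, hdisc c, rfl⟩
      have hle := le_csSup hRbdd hmemR
      have hEq : Cardinal.lift.{u} (Cardinal.mk (Dc c)) =
          Cardinal.lift.{0} (Cardinal.mk ((fun d : X × X => φ d.1 * (φ d.2)⁻¹) '' Dc c)) :=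
        Cardinal.lift_mk_eq'.mpr ⟨Equiv.Set.imageOfInjOn _ _ (hinj c)⟩
      rw [hEq, Cardinal.lift_uzero]
      exact hle
    calc Cardinal.lift.{u} (Cardinal.mk D)
        = Cardinal.lift.{u} (Cardinal.mk (⋃ c, Dc c : Set (X × X))) := by rw [← hcover]
      _ ≤ Cardinal.lift.{u} (Cardinal.mk (ℚ × ℚ × ℚ) * ⨆ c, Cardinal.mk (Dc c)) :=
          Cardinal.lift_le.mpr (Cardinal.mk_iUnion_le Dc)
      _ = Cardinal.aleph0 * ⨆ c, Cardinal.lift.{u} (Cardinal.mk (Dc c)) := by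
          rw [Cardinal.lift_mul, Cardinal.lift_iSup (Cardinal.bddAbove_range _),
            Cardinal.mk_eq_aleph0, Cardinal.lift_aleph0]
      _ ≤ Cardinal.aleph0 * sSup R := by
          apply mul_le_mul_right
          exact ciSup_le fun c => hcard c
      _ = sSup R := Cardinal.aleph0_mul_eq haleph
  -- conclusion
  have hLbdd : BddAbove {c : Cardinal.{0} | ∃ D : Set (X × X),
      DiscreteTopology D ∧ Cardinal.mk D = c} := by
    refine ⟨Cardinal.mk (X × X), ?_⟩
    rintro c ⟨D, _, rfl⟩
    exact Cardinal.mk_set_le D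
  rw [Cardinal.lift_uzero, hspreadG]
  show Cardinal.lift.{u} (sSup {c : Cardinal.{0} | ∃ D : Set (X × X),
      DiscreteTopology D ∧ Cardinal.mk D = c}) ≤ sSup R
  rw [Cardinal.lift_sSup hLbdd]
  apply csSup_le'
  rintro c ⟨c', ⟨D, hDdisc, rfl⟩, rfl⟩
  exact key D hDdisc
end

section
/- Suppose Γ is a subset of ℝₗ × ℝₗ and u, v are rational numbers such that for every (x, y) ∈ Γ one has x < u, y < v, and Γ ∩ ([x,u) × [y,v)) = {(x,y)}. Then Γ is the graph of a strictly decreasing function; that is, for any two distinct points (x₁,y₁), (x₂,y₂) ∈ Γ, x₁ ≠ x₂, and x₁ < x₂ implies y₁ > y₂. -/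
open Set Topology

/-- If every point $(x,y)$ of $\Gamma$ is the unique point of $\Gamma$ in
$[x,u) \times [y,v)$, then $\Gamma$ is the graph of a strictly decreasing function. -/
theorem graph_of_isolating_boxes (Γ : Set (ℝₗ × ℝₗ)) (u v : ℚ)
    (h : ∀ p ∈ Γ, p.1 < (u : ℝₗ) ∧ p.2 < (v : ℝₗ) ∧
      Γ ∩ (Set.Ico p.1 (u : ℝₗ) ×ˢ Set.Ico p.2 (v : ℝₗ)) = {p}) :
    ∀ p ∈ Γ, ∀ q ∈ Γ, p ≠ q → p.1 ≠ q.1 ∧ (p.1 < q.1 → q.2 < p.2) := by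
  have key : ∀ p ∈ Γ, ∀ q ∈ Γ, p.1 ≤ q.1 → p.2 ≤ q.2 → p = q := by
    intro p hp q hq h1 h2
    obtain ⟨hu, hv, hbox⟩ := h p hp
    obtain ⟨qu, qv, _⟩ := h q hq
    have : q ∈ Γ ∩ (Set.Ico p.1 (u : ℝₗ) ×ˢ Set.Ico p.2 (v : ℝₗ)) :=
      ⟨hq, ⟨h1, qu⟩, ⟨h2, qv⟩⟩
    rw [hbox] at this
    exact this.symm
  intro p hp q hq hne
  constructor
  · intro h1
    rcases le_total p.2 q.2 with h2 | h2
    · exact hne (key p hp q hq h1.le h2)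
    · exact hne (key q hq p hp h1.ge h2).symm
  · intro h1
    by_contra h2
    exact hne (key p hp q hq h1.le (not_lt.mp h2))
end

section
/- The set ℚ of rational numbers is k-dense in the Sorgenfrey line ℝₗ: every compact subset K ⊆ ℝₗ is contained in a compact subset K̃ ⊆ ℝₗ such that ℚ ∩ K̃ is dense in K̃ (in the subspace topology of K̃). In particular, the Sorgenfrey line is k-separable. -/
open Set Topology

noncomputable instance : ConditionallyCompleteLinearOrder ℝₗ :=
  inferInstanceAs (ConditionallyCompleteLinearOrder ℝ)
namespace SL

lemma isOpen_Ico (a b : ℝₗ) : IsOpen (Ico a b) := by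
  rcases lt_or_ge a b with h | h
  · exact TopologicalSpace.GenerateOpen.basic _ ⟨a, b, h, rfl⟩
  · rw [Ico_eq_empty (by exact fun hh => absurd h (not_le.2 hh))]
    exact isOpen_empty

lemma exists_Ico_subset {O : Set ℝₗ} (h : IsOpen O) {x : ℝₗ} (hx : x ∈ O) :
    ∃ ε : ℝₗ, 0 < ε ∧ Ico x (x + ε) ⊆ O := by
  induction h with
  | basic s hs =>
      obtain ⟨a, b, hab, rfl⟩ := hs
      exact ⟨b - x, by simpa using hx.2, fun y hy => ⟨le_trans hx.1 hy.1, by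
        have := hy.2; linarith [this]⟩⟩
  | univ => exact ⟨1, one_pos, fun y _ => mem_univ y⟩
  | inter s t _ _ ihs iht =>
      obtain ⟨ε₁, hε₁, h₁⟩ := ihs hx.1
      obtain ⟨ε₂, hε₂, h₂⟩ := iht hx.2
      exact ⟨min ε₁ ε₂, lt_min hε₁ hε₂,
        fun y hy => ⟨h₁ ⟨hy.1, lt_of_lt_of_le hy.2 (by simp [min_le_left])⟩,
                     h₂ ⟨hy.1, lt_of_lt_of_le hy.2 (by simp [min_le_right])⟩⟩⟩
  | sUnion S hS ih =>
      obtain ⟨s, hsS, hxs⟩ := hx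
      obtain ⟨ε, hε, hsub⟩ := ih s hsS hxs
      exact ⟨ε, hε, fun y hy => ⟨s, hsS, hsub hy⟩⟩

lemma isOpen_Ici (a : ℝₗ) : IsOpen (Ici a) := by
  have : Ici a = ⋃ n : ℕ, Ico a (a + (n + 1)) := by
    ext x
    simp only [mem_Ici, mem_iUnion, mem_Ico]
    constructor
    · intro hx
      obtain ⟨n, hn⟩ := exists_nat_gt (x - a)
      exact ⟨n, hx, by push_cast; linarith⟩
    · rintro ⟨n, h1, _⟩; exact h1
  rw [this]
  exact isOpen_iUnion fun n => isOpen_Ico _ _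

lemma isOpen_Iio (a : ℝₗ) : IsOpen (Iio a) := by
  have : Iio a = ⋃ n : ℕ, Ico (a - (n + 1)) a := by
    ext x
    simp only [mem_Iio, mem_iUnion, mem_Ico]
    constructor
    · intro hx
      obtain ⟨n, hn⟩ := exists_nat_gt (a - x)
      exact ⟨n, by push_cast; linarith, hx⟩
    · rintro ⟨n, _, h2⟩; exact h2
  rw [this]
  exact isOpen_iUnion fun n => isOpen_Ico _ _

lemma mem_closure {A : Set ℝₗ} {x : ℝₗ}
    (h : ∀ ε : ℝₗ, 0 < ε → (A ∩ Ico x (x + ε)).Nonempty) : x ∈ closure A := by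
  rw [mem_closure_iff]
  intro O hO hxO
  obtain ⟨ε, hε, hsub⟩ := exists_Ico_subset hO hxO
  obtain ⟨y, hyA, hy⟩ := h ε hε
  exact ⟨y, hsub hy, hyA⟩

end SL
namespace SL

variable {K : Set ℝₗ}

lemma bddAbove_of_compact (hK : IsCompact K) : BddAbove K := by
  have hcover : K ⊆ ⋃ t : ℝₗ, Iio t := fun x _ => mem_iUnion.2 ⟨x + 1, by simp⟩
  obtain ⟨F, hF⟩ := hK.elim_finite_subcover (fun t : ℝₗ => Iio t) (fun t => isOpen_Iio t) hcover
  rcases F.eq_empty_or_nonempty with rfl | hFne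
  · refine ⟨0, fun x hx => absurd (hF hx) (by simp)⟩
  · refine ⟨F.max' hFne, fun x hx => ?_⟩
    obtain ⟨t, htF, hxt⟩ := mem_iUnion₂.1 (hF hx)
    exact le_trans (le_of_lt hxt) (F.le_max' t htF)

lemma bddBelow_of_compact (hK : IsCompact K) : BddBelow K := by
  have hcover : K ⊆ ⋃ t : ℝₗ, Ici t := fun x _ => mem_iUnion.2 ⟨x, le_refl x⟩
  obtain ⟨F, hF⟩ := hK.elim_finite_subcover (fun t : ℝₗ => Ici t) (fun t => isOpen_Ici t) hcover
  rcases F.eq_empty_or_nonempty with rfl | hFne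
  · refine ⟨0, fun x hx => absurd (hF hx) (by simp)⟩
  · refine ⟨F.min' hFne, fun x hx => ?_⟩
    obtain ⟨t, htF, hxt⟩ := mem_iUnion₂.1 (hF hx)
    exact le_trans (F.min'_le t htF) hxt

/-- every nonempty subset of a Sorgenfrey-compact set has a greatest element -/
lemma exists_greatest_of_compact (hK : IsCompact K) {S : Set ℝₗ} (hSK : S ⊆ K)
    (hS : S.Nonempty) : ∃ g, IsGreatest S g := by
  by_contra hno
  push_neg at hno
  set s : ℝₗ := sSup S with hs
  have hbdd : BddAbove S := (bddAbove_of_compact hK).mono hSK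
  have hub : ∀ z ∈ S, z ≤ s := fun z hz => le_csSup hbdd hz
  have hsnot : s ∉ S := fun hmem => hno s ⟨hmem, hub⟩
  set U : ℝₗ → Set ℝₗ := fun t => if t < s then Iio t else Ici s with hU
  have hUopen : ∀ t, IsOpen (U t) := by
    intro t; rw [hU]; dsimp only
    split
    · exact isOpen_Iio t
    · exact isOpen_Ici s
  have hcover : K ⊆ ⋃ t, U t := by
    intro x _
    rcases lt_or_ge x s with hx | hx
    · refine mem_iUnion.2 ⟨(x + s)/2, ?_⟩
      rw [hU]; dsimp only
      rw [if_pos (by linarith)]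
      exact mem_Iio.2 (by linarith)
    · exact mem_iUnion.2 ⟨s, by rw [hU]; simp [mem_Ici.2 hx]⟩
  obtain ⟨F, hF⟩ := hK.elim_finite_subcover U hUopen hcover
  have hmemU : ∀ z ∈ S, z < s → ∃ t ∈ F, t < s ∧ z < t := by
    intro z hz hzs
    obtain ⟨t, htF, hzt⟩ := mem_iUnion₂.1 (hF (hSK hz))
    rw [hU] at hzt; dsimp only at hzt
    by_cases ht : t < s
    · rw [if_pos ht] at hzt; exact ⟨t, htF, ht, hzt⟩
    · rw [if_neg ht] at hzt; exact absurd hzt (not_le.2 hzs)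
  obtain ⟨z₀, hz₀⟩ := hS
  have hz₀s : z₀ < s := lt_of_le_of_ne (hub _ hz₀) (fun h => hsnot (h ▸ hz₀))
  set T := F.filter (fun t => t < s) with hT
  have hTne : T.Nonempty := by
    obtain ⟨t, htF, hts, _⟩ := hmemU z₀ hz₀ hz₀s
    exact ⟨t, Finset.mem_filter.2 ⟨htF, hts⟩⟩
  set t₀ := T.max' hTne with ht₀
  have ht₀s : t₀ < s := (Finset.mem_filter.1 (T.max'_mem hTne)).2
  obtain ⟨z, hzS, htz⟩ := exists_lt_of_lt_csSup ⟨z₀, hz₀⟩ ht₀s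
  have hzs : z < s := lt_of_le_of_ne (hub _ hzS) (fun h => hsnot (h ▸ hzS))
  obtain ⟨t, htF, hts, hzt⟩ := hmemU z hzS hzs
  have : t ≤ t₀ := T.le_max' t (Finset.mem_filter.2 ⟨htF, hts⟩)
  linarith

/-- a point not in a Sorgenfrey-compact set is separated from it -/
lemma separated_of_not_mem (hK : IsCompact K) {w : ℝₗ} (hw : w ∉ K) :
    ∃ δ : ℝₗ, 0 < δ ∧ ∀ y ∈ K, y ∉ Ioo (w - δ) (w + δ) := by
  by_contra hno
  push_neg at hno
  have hnear : ∀ δ : ℝₗ, 0 < δ → ∃ y ∈ K, y ∈ Ioo (w - δ) (w + δ) := by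
    intro δ hδ
    obtain ⟨y, hyK, hy⟩ := hno δ hδ
    exact ⟨y, hyK, hy⟩
  by_cases hright : ∀ δ : ℝₗ, 0 < δ → (K ∩ Ioo w (w + δ)).Nonempty
  · -- points accumulate from the right
    set U : ℝₗ → Set ℝₗ := fun t => if w < t then Ici t else Iio w with hU
    have hUopen : ∀ t, IsOpen (U t) := by
      intro t; rw [hU]; dsimp only
      split
      · exact isOpen_Ici t
      · exact isOpen_Iio w
    have hcover : K ⊆ ⋃ t, U t := by
      intro x hx
      rcases lt_trichotomy x w with h | h | h
      · exact mem_iUnion.2 ⟨w, by rw [hU]; simp [h]⟩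
      · exact absurd (h ▸ hx) hw
      · exact mem_iUnion.2 ⟨x, by rw [hU]; simp [h, mem_Ici]⟩
    obtain ⟨F, hF⟩ := hK.elim_finite_subcover U hUopen hcover
    have hmemU : ∀ y ∈ K, w < y → ∃ t ∈ F, w < t ∧ t ≤ y := by
      intro y hy hwy
      obtain ⟨t, htF, hyt⟩ := mem_iUnion₂.1 (hF hy)
      rw [hU] at hyt; dsimp only at hyt
      by_cases ht : w < t
      · rw [if_pos ht] at hyt; exact ⟨t, htF, ht, hyt⟩
      · rw [if_neg ht] at hyt; exact absurd (lt_trans hwy hyt) (lt_irrefl w)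
    set T := F.filter (fun t => w < t) with hT
    have hTne : T.Nonempty := by
      obtain ⟨y, hyK, hy⟩ := hright 1 one_pos
      obtain ⟨t, htF, hwt, _⟩ := hmemU y hyK hy.1
      exact ⟨t, Finset.mem_filter.2 ⟨htF, hwt⟩⟩
    set t₀ := T.min' hTne with ht₀
    have hwt₀ : w < t₀ := (Finset.mem_filter.1 (T.min'_mem hTne)).2
    obtain ⟨y, hyK, hy⟩ := hright (t₀ - w) (by linarith)
    obtain ⟨t, htF, hwt, hty⟩ := hmemU y hyK hy.1
    have h1 : t₀ ≤ t := T.min'_le t (Finset.mem_filter.2 ⟨htF, hwt⟩)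
    have h2 : y < w + (t₀ - w) := hy.2
    linarith
  · -- points accumulate only from the left
    push_neg at hright
    obtain ⟨δ₁, hδ₁, hempty⟩ := hright
    have hleft : ∀ δ : ℝₗ, 0 < δ → δ ≤ δ₁ → (K ∩ Ioo (w - δ) w).Nonempty := by
      intro δ hδ hδδ₁
      obtain ⟨y, hyK, hy⟩ := hnear δ hδ
      refine ⟨y, hyK, hy.1, ?_⟩
      rcases lt_trichotomy y w with h | h | h
      · exact h
      · exact absurd (h ▸ hyK) hw
      · exfalso
        have : y ∈ K ∩ Ioo w (w + δ₁) := ⟨hyK, h, lt_of_lt_of_le hy.2 (by linarith)⟩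
        rw [hempty] at this; exact this
    have hSne : (K ∩ Ioo (w - δ₁) w).Nonempty := hleft δ₁ hδ₁ le_rfl
    obtain ⟨g, hg⟩ := exists_greatest_of_compact hK (inter_subset_left) hSne
    have hgw : g < w := hg.1.2.2
    have hgl : w - δ₁ < g := hg.1.2.1
    obtain ⟨y, hyK, hy⟩ := hleft (w - g) (by linarith) (by linarith)
    have : y ≤ g := hg.2 ⟨hyK, by constructor <;> [linarith [hy.1]; exact hy.2]⟩
    have := hy.1
    linarith

end SL

namespace SL

/-- Sufficient criterion for compactness in the Sorgenfrey line. -/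
lemma isCompact_of {C : Set ℝₗ}
    (hb : ∀ S ⊆ C, S.Nonempty → ∃ g, IsGreatest S g)
    (hc : ∀ t : ℝₗ, (C ∩ Ici t).Nonempty → ∃ m, IsLeast (C ∩ Ici t) m)
    (hd : C.Nonempty → ∃ m, IsLeast C m) : IsCompact C := by
  classical
  refine isCompact_of_finite_subcover ?_
  intro ι U hUopen hcover
  rcases C.eq_empty_or_nonempty with rfl | hCne
  · exact ⟨∅, by simp⟩
  obtain ⟨m₀, hm₀C, hm₀⟩ := hd hCne
  have hwf : WellFounded (fun a b : ↥C => (b : ℝₗ) < (a : ℝₗ)) := by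
    rw [WellFounded.wellFounded_iff_has_min]
    intro s hs
    obtain ⟨g, hg⟩ := hb (Subtype.val '' s) (by rintro _ ⟨x, _, rfl⟩; exact x.2) (hs.image _)
    obtain ⟨x, hxs, hxg⟩ := hg.1
    refine ⟨x, hxs, fun y hy hlt => ?_⟩
    have h1 : (y : ℝₗ) ≤ g := hg.2 ⟨y, hy, rfl⟩
    rw [hxg] at hlt
    exact absurd h1 (not_le.2 hlt)
  have main : ∀ x : ↥C, ∃ F : Finset ι, C ∩ Ici (x : ℝₗ) ⊆ ⋃ i ∈ F, U i := by
    intro x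
    induction x using hwf.induction with
    | _ x IH =>
      obtain ⟨i₀, hi₀⟩ := mem_iUnion.1 (hcover x.2)
      obtain ⟨ε, hε, hsub⟩ := exists_Ico_subset (hUopen i₀) hi₀
      by_cases hne : (C ∩ Ici ((x : ℝₗ) + ε)).Nonempty
      · obtain ⟨y, hy⟩ := hc _ hne
        have hyC : y ∈ C := hy.1.1
        have hyx : (x : ℝₗ) < y := lt_of_lt_of_le (by linarith) hy.1.2
        obtain ⟨F, hF⟩ := IH ⟨y, hyC⟩ hyx
        refine ⟨insert i₀ F, fun z hz => ?_⟩
        rcases lt_or_ge z ((x : ℝₗ) + ε) with hzlt | hzge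
        · exact mem_iUnion₂.2 ⟨i₀, Finset.mem_insert_self _ _, hsub ⟨hz.2, hzlt⟩⟩
        · have hzy : y ≤ z := hy.2 ⟨hz.1, hzge⟩
          obtain ⟨i, hiF, hzi⟩ := mem_iUnion₂.1 (hF ⟨hz.1, hzy⟩)
          exact mem_iUnion₂.2 ⟨i, Finset.mem_insert_of_mem hiF, hzi⟩
      · refine ⟨{i₀}, fun z hz => ?_⟩
        rcases lt_or_ge z ((x : ℝₗ) + ε) with hzlt | hzge
        · exact mem_iUnion₂.2 ⟨i₀, Finset.mem_singleton_self _, hsub ⟨hz.2, hzlt⟩⟩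
        · exact absurd ⟨hz.1, hzge⟩ (fun h => hne ⟨z, h⟩)
  obtain ⟨F, hF⟩ := main ⟨m₀, hm₀C⟩
  exact ⟨F, fun z hz => hF ⟨hz, hm₀ hz⟩⟩

end SL

namespace SL

lemma wf_gt {C : Set ℝₗ} (hb : ∀ S ⊆ C, S.Nonempty → ∃ g, IsGreatest S g) :
    WellFounded (fun a b : ↥C => (b : ℝₗ) < (a : ℝₗ)) := by
  rw [WellFounded.wellFounded_iff_has_min]
  intro s hs
  obtain ⟨g, hg⟩ := hb (Subtype.val '' s) (by rintro _ ⟨x, _, rfl⟩; exact x.2) (hs.image _)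
  obtain ⟨x, hxs, hxg⟩ := hg.1
  refine ⟨x, hxs, fun y hy hlt => ?_⟩
  have h1 : (y : ℝₗ) ≤ g := hg.2 ⟨y, hy, rfl⟩
  rw [hxg] at hlt
  exact absurd h1 (not_le.2 hlt)

variable (K : Set ℝₗ)

open scoped Classical

/-- upper bound used to choose rationals -/
noncomputable def B (x : ℝₗ) (n : ℕ) : ℝₗ :=
  if (K ∩ Ioi x).Nonempty then min (x + 1/(n+1)) (sInf (K ∩ Ioi x)) else x + 1/(n+1)

def Good (x : ℝₗ) (n : ℕ) : Prop := x < B K x n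

noncomputable def r (x : ℝₗ) (n : ℕ) : ℝₗ :=
  if h : ∃ q : ℚ, x < (q : ℝₗ) ∧ (q : ℝₗ) < B K x n then ((h.choose : ℚ) : ℝₗ) else x

/-- the added set of rational points -/
def R : Set ℝₗ := {y | ∃ x ∈ K, ∃ n : ℕ, Good K x n ∧ y = r K x n}

lemma B_le_add (x : ℝₗ) (n : ℕ) : B K x n ≤ x + 1/(n+1) := by
  unfold B; split
  · exact min_le_left _ _
  · exact le_rfl

lemma B_le_mem (x : ℝₗ) (n : ℕ) {y : ℝₗ} (hy : y ∈ K) (hxy : x < y) : B K x n ≤ y := by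
  unfold B
  rw [if_pos ⟨y, hy, hxy⟩]
  exact le_trans (min_le_right _ _) (csInf_le ⟨x, fun b hb => le_of_lt hb.2⟩ ⟨hy, hxy⟩)

lemma r_spec {x : ℝₗ} {n : ℕ} (h : Good K x n) :
    x < r K x n ∧ r K x n < B K x n ∧ ∃ q : ℚ, r K x n = (q : ℝₗ) := by
  have hq : ∃ q : ℚ, x < (q : ℝₗ) ∧ (q : ℝₗ) < B K x n := exists_rat_btwn h
  rw [r, dif_pos hq]
  exact ⟨hq.choose_spec.1, hq.choose_spec.2, hq.choose, rfl⟩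

lemma r_lt_mem {x : ℝₗ} {n : ℕ} (h : Good K x n) {y : ℝₗ} (hy : y ∈ K) (hxy : x < y) :
    r K x n < y :=
  lt_of_lt_of_le (r_spec K h).2.1 (B_le_mem K x n hy hxy)

lemma r_lt_add {x : ℝₗ} {n : ℕ} (h : Good K x n) : r K x n < x + 1/(n+1) :=
  lt_of_lt_of_le (r_spec K h).2.1 (B_le_add K x n)

lemma R_rat {y : ℝₗ} (hy : y ∈ R K) : y ∈ Set.range (fun q : ℚ => (q : ℝₗ)) := by
  obtain ⟨x, _, n, hg, rfl⟩ := hy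
  obtain ⟨q, hq⟩ := (r_spec K hg).2.2
  exact ⟨q, hq.symm⟩

lemma inv_nat_lt {ε : ℝₗ} (hε : 0 < ε) : ∃ n : ℕ, 1/((n : ℝₗ)+1) < ε := by
  obtain ⟨n, hn⟩ := exists_nat_gt (1/ε)
  refine ⟨n, ?_⟩
  rw [div_lt_iff₀ (by positivity)]
  rw [div_lt_iff₀ hε] at hn
  nlinarith

lemma exists_rat_near (hK : IsCompact K) :
    ∀ x ∈ K, ∀ ε : ℝₗ, 0 < ε → ∃ y ∈ R K, x ≤ y ∧ y < x + ε := by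
  have hwf := wf_gt (fun S hS hne => exists_greatest_of_compact hK hS hne)
  suffices h : ∀ x : ↥K, ∀ ε : ℝₗ, 0 < ε → ∃ y ∈ R K, (x : ℝₗ) ≤ y ∧ y < (x : ℝₗ) + ε by
    intro x hx ε hε; exact h ⟨x, hx⟩ ε hε
  intro x
  induction x using hwf.induction with
  | _ x IH =>
    intro ε hε
    by_cases hcase : (K ∩ Ioi (x : ℝₗ)).Nonempty ∧ sInf (K ∩ Ioi (x : ℝₗ)) ≤ (x : ℝₗ)
    · -- x is a limit from the right of K : recurse
      obtain ⟨hne, hinf⟩ := hcase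
      have : sInf (K ∩ Ioi (x : ℝₗ)) < (x : ℝₗ) + ε/2 := lt_of_le_of_lt hinf (by linarith)
      obtain ⟨y, hy, hylt⟩ :=
        (csInf_lt_iff ⟨(x : ℝₗ), fun b hb => le_of_lt hb.2⟩ hne).1 this
      have hxy : (x : ℝₗ) < y := hy.2
      obtain ⟨z, hzR, hyz, hzlt⟩ := IH ⟨y, hy.1⟩ hxy ((x : ℝₗ) + ε - y) (by simp; linarith)
      exact ⟨z, hzR, le_trans (le_of_lt hxy) hyz, by dsimp at hzlt; linarith⟩
    · -- x is isolated from the right : pick a rational directly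
      obtain ⟨n, hn⟩ := inv_nat_lt hε
      have hp : (0:ℝₗ) < 1/((n:ℝₗ)+1) := by positivity
      have hgood : Good K (x : ℝₗ) n := by
        unfold Good B
        split
        · rename_i hne
          rcases not_and_or.1 hcase with h | h
          · exact absurd hne h
          · exact lt_min (by linarith) (not_le.1 h)
        · linarith
      refine ⟨r K (x : ℝₗ) n, ⟨(x : ℝₗ), x.2, n, hgood, rfl⟩,
        le_of_lt (r_spec K hgood).1, lt_trans (r_lt_add K hgood) (by linarith)⟩

end SL

namespace SL

variable (K : Set ℝₗ)

lemma exists_greatest_union (hK : IsCompact K) {S : Set ℝₗ}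
    (hSK : S ⊆ K ∪ R K) (hS : S.Nonempty) : ∃ g, IsGreatest S g := by
  classical
  set A := {x | x ∈ K ∧ (x ∈ S ∨ ∃ n, Good K x n ∧ r K x n ∈ S)} with hA
  have hAne : A.Nonempty := by
    obtain ⟨z, hz⟩ := hS
    rcases hSK hz with hzK | hzR
    · exact ⟨z, hzK, Or.inl hz⟩
    · obtain ⟨x, hxK, n, hg, rfl⟩ := hzR
      exact ⟨x, hxK, Or.inr ⟨n, hg, hz⟩⟩
  obtain ⟨a, haA, haub⟩ := exists_greatest_of_compact hK (fun x hx => hx.1) hAne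
  have key : ∀ z ∈ S, a < z → ∃ n, Good K a n ∧ z = r K a n := by
    intro z hz haz
    rcases hSK hz with hzK | hzR
    · exact absurd (haub ⟨hzK, Or.inl hz⟩) (not_le.2 haz)
    · obtain ⟨x, hxK, n, hg, rfl⟩ := hzR
      have hxa : x ≤ a := haub ⟨hxK, Or.inr ⟨n, hg, hz⟩⟩
      rcases eq_or_lt_of_le hxa with rfl | hlt
      · exact ⟨n, hg, rfl⟩
      · exact absurd (r_lt_mem K hg haA.1 hlt) (not_lt.2 (le_of_lt haz))
  by_cases hcase : ∃ z ∈ S, a < z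
  · obtain ⟨z, hzS, haz⟩ := hcase
    set N := {n : ℕ | Good K a n ∧ r K a n ∈ S ∧ z ≤ r K a n} with hN
    have hNfin : N.Finite := by
      obtain ⟨m, hm⟩ := exists_nat_gt (1/(z - a) : ℝₗ)
      refine Set.Finite.subset (Set.finite_Iio m) ?_
      intro k hk
      obtain ⟨hgood, _, hzk⟩ := hk
      have h1 : r K a k < a + 1/((k : ℝₗ)+1) := r_lt_add K hgood
      have h2 : (0:ℝₗ) < z - a := by linarith
      have h3 : 1/((k : ℝₗ)+1) > z - a := by linarith
      have hk1 : (0:ℝₗ) < (k:ℝₗ)+1 := by positivity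
      have h4 : (k : ℝₗ) + 1 < 1/(z - a) := by
        rw [lt_div_iff₀ h2]
        rw [gt_iff_lt, lt_div_iff₀ hk1] at h3
        nlinarith
      have : (k : ℝₗ) < (m : ℝₗ) := by linarith
      exact Set.mem_Iio.2 (by exact_mod_cast this)
    have hNne : N.Nonempty := by
      obtain ⟨n₀, hg₀, rfl⟩ := key z hzS haz
      exact ⟨n₀, hg₀, hzS, le_rfl⟩
    obtain ⟨k, hkN, hkmax⟩ := Set.exists_max_image N (fun n => r K a n) hNfin hNne
    refine ⟨r K a k, hkN.2.1, fun w hw => ?_⟩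
    rcases le_or_gt w a with hwa | haw
    · exact le_trans hwa (le_trans (le_of_lt haz) hkN.2.2)
    · obtain ⟨n, hgn, rfl⟩ := key w hw haw
      rcases le_or_gt z (r K a n) with hzw | hwz
      · exact hkmax n ⟨hgn, hw, hzw⟩
      · exact le_trans (le_of_lt hwz) hkN.2.2
  · push_neg at hcase
    rcases haA.2 with haS | ⟨n, hgn, hrS⟩
    · exact ⟨a, haS, fun w hw => hcase w hw⟩
    · exact absurd (hcase _ hrS) (not_le.2 (r_spec K hgn).1)

lemma union_bddBelow (hK : IsCompact K) : ∃ c : ℝₗ, K ∪ R K ⊆ Ici c := by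
  obtain ⟨c, hc⟩ := bddBelow_of_compact hK
  refine ⟨c, fun y hy => ?_⟩
  rcases hy with hyK | ⟨x, hxK, n, hg, rfl⟩
  · exact hc hyK
  · exact le_trans (hc hxK) (le_of_lt (r_spec K hg).1)

lemma exists_least_union (hK : IsCompact K) (t : ℝₗ)
    (hne : ((K ∪ R K) ∩ Ici t).Nonempty) : ∃ m, IsLeast ((K ∪ R K) ∩ Ici t) m := by
  classical
  set S := (K ∪ R K) ∩ Ici t with hSdef
  have hbdd : BddBelow S := ⟨t, fun z hz => hz.2⟩
  set m := sInf S with hm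
  have hlb : ∀ z ∈ S, m ≤ z := fun z hz => csInf_le hbdd hz
  by_cases hmem : m ∈ K ∪ R K
  · exact ⟨m, ⟨hmem, le_csInf hne (fun z hz => hz.2)⟩, hlb⟩
  exfalso
  have hmS : m ∉ S := fun h => hmem h.1
  have hnear : ∀ δ : ℝₗ, 0 < δ → ∃ z ∈ S, m < z ∧ z < m + δ := by
    intro δ hδ
    obtain ⟨z, hzS, hzlt⟩ := (csInf_lt_iff hbdd hne).1 (by linarith : m < m + δ)
    exact ⟨z, hzS, lt_of_le_of_ne (hlb z hzS) (fun h => hmS (h ▸ hzS)), hzlt⟩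
  have hmK : m ∉ K := fun h => hmem (Or.inl h)
  obtain ⟨δ₀, hδ₀, hsep⟩ := separated_of_not_mem hK hmK
  obtain ⟨z₁, hz₁S, hmz₁, hz₁lt⟩ := hnear δ₀ hδ₀
  -- z₁ is not in K
  have hz_not_K : ∀ z ∈ S, m < z → z < m + δ₀ → z ∉ K := by
    intro z _ h1 h2 hzK
    exact hsep z hzK ⟨by linarith, h2⟩
  have hz₁R : z₁ ∈ R K := (hz₁S.1).resolve_left (hz_not_K z₁ hz₁S hmz₁ hz₁lt)
  obtain ⟨x₁, hx₁K, n₁, hg₁, hz₁eq⟩ := hz₁R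
  have hx₁lt : x₁ < z₁ := hz₁eq ▸ (r_spec K hg₁).1
  have hx₁le : x₁ ≤ m - δ₀ := by
    by_contra h
    push_neg at h
    exact hsep x₁ hx₁K ⟨h, by linarith⟩
  have key : ∀ z ∈ S, m < z → z < m + δ₀ → ∃ n, Good K x₁ n ∧ z = r K x₁ n := by
    intro z hzS h1 h2
    have hzR : z ∈ R K := (hzS.1).resolve_left (hz_not_K z hzS h1 h2)
    obtain ⟨x, hxK, n, hg, rfl⟩ := hzR
    have hxle : x ≤ m - δ₀ := by
      by_contra h
      push_neg at h
      exact hsep x hxK ⟨h, by linarith [(r_spec K hg).1]⟩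
    rcases lt_trichotomy x x₁ with hlt | heq | hgt
    · have := r_lt_mem K hg hx₁K hlt
      linarith
    · exact ⟨n, heq ▸ hg, heq ▸ rfl⟩
    · have := r_lt_mem K hg₁ hxK hgt
      linarith [(r_spec K hg).1]
  -- the set of candidates near m is finite
  set W := S ∩ Ioo m (m + δ₀) with hW
  have hWfin : W.Finite := by
    obtain ⟨mb, hmb⟩ := exists_nat_gt (1/δ₀ : ℝₗ)
    have : W ⊆ (fun n : ℕ => r K x₁ n) '' (Set.Iio mb) := by
      intro z hz
      obtain ⟨n, hgn, rfl⟩ := key z hz.1 hz.2.1 hz.2.2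
      refine ⟨n, Set.mem_Iio.2 ?_, rfl⟩
      have h1 : r K x₁ n < x₁ + 1/((n:ℝₗ)+1) := r_lt_add K hgn
      have h2 : δ₀ < 1/((n:ℝₗ)+1) := by linarith [hz.2.1]
      have hn1 : (0:ℝₗ) < (n:ℝₗ)+1 := by positivity
      have h4 : (n : ℝₗ) + 1 < 1/δ₀ := by
        rw [lt_div_iff₀ hδ₀]
        rw [lt_div_iff₀ hn1] at h2
        nlinarith
      have : (n : ℝₗ) < (mb : ℝₗ) := by linarith
      exact_mod_cast this
    exact Set.Finite.subset ((Set.finite_Iio mb).image _) this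
  have hWne : W.Nonempty := ⟨z₁, hz₁S, hmz₁, hz₁lt⟩
  obtain ⟨μ, hμW, hμmin⟩ := Set.exists_min_image W id hWfin hWne
  obtain ⟨z', hz'S, hmz', hz'μ⟩ := hnear (μ - m) (by linarith [hμW.2.1])
  have hz'W : z' ∈ W := ⟨hz'S, hmz', by linarith [hμW.2.2]⟩
  have : μ ≤ z' := hμmin z' hz'W
  linarith

lemma union_subset_closure (hK : IsCompact K) :
    K ∪ R K ⊆ closure ((Set.range (fun q : ℚ => (q : ℝₗ))) ∩ (K ∪ R K)) := by
  intro x hx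
  rcases hx with hxK | hxR
  · apply mem_closure
    intro ε hε
    obtain ⟨y, hyR, hxy, hyε⟩ := exists_rat_near K hK x hxK ε hε
    exact ⟨y, ⟨R_rat K hyR, Or.inr hyR⟩, hxy, hyε⟩
  · exact subset_closure ⟨R_rat K hxR, Or.inr hxR⟩

end SL

/-- The rationals are $k$-dense in the Sorgenfrey line; in particular the Sorgenfrey line is
$k$-separable. -/
theorem rat_kDense_sorgenfrey :
    IsKDense (Set.range (fun q : ℚ => (q : ℝₗ))) ∧ KSeparable ℝₗ := by
  have hkd : IsKDense (Set.range (fun q : ℚ => (q : ℝₗ))) := by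
    intro K hK
    refine ⟨K ∪ SL.R K, ?_, subset_union_left, SL.union_subset_closure K hK⟩
    refine SL.isCompact_of (fun S hS hne => SL.exists_greatest_union K hK hS hne)
      (fun t hne => SL.exists_least_union K hK t hne) ?_
    intro hne
    obtain ⟨c, hc⟩ := SL.union_bddBelow K hK
    obtain ⟨z, hz⟩ := hne
    obtain ⟨m, hm⟩ := SL.exists_least_union K hK c ⟨z, hz, hc hz⟩
    exact ⟨m, hm.1.1, fun y hy => hm.2 ⟨hy, hc hy⟩⟩
  exact ⟨hkd, ⟨_, Set.countable_range _, hkd⟩⟩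
end
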